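/- Let T > 0, γ > 0, Y ≥ 0, ι ≥ 0, and ρ, v with ρv > 0; set κ := ι + ρv. Define a₂(t) = (1/(γκ))·(1 − e^{−2κ(T−t)}) and a₁(t) = (ιY/(γκ²))·(1 − e^{−κ(T−t)})². Let a₁⁰, a₂⁰ : [0,T] → ℝ be continuous, and for each n ≥ 0 let a₂^{n+1}, a₁^{n+1} : [0,T] → ℝ be differentiable with (a₂^{n+1})′(t) = 2ι·a₂^{n+1}(t) + 2ρv·a₂ⁿ(t) − 2/γ, a₂^{n+1}(T) = 0, and (a₁^{n+1})′(t) = ι·a₁^{n+1}(t) + ρv·a₁ⁿ(t) − ιY·a₂^{n+1}(t), a₁^{n+1}(T) = 0, for all t ∈ [0,T]. Then a₁ⁿ converges to a₁ uniformly on [0,T]; specifically, with M = sup_t |a₂(t) − a₂⁰(t)| and m = sup_t |a₁(t) − a₁⁰(t)|, one has |a₁(t) − a₁ⁿ(t)| ≤ (ρv(T−t))ⁿ/n! · m + (ιY/(ρv))·(2ρv(T−t))^{n+1}/(n+1)! · M for all n and t ∈ [0,T]. -/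

import Mathlib

open intervalIntegral in
lemma int_poly (t T A : ℝ) (k : ℕ) :
    ∫ s in t..T, A * (T - s) ^ k = A * ((T - t) ^ (k + 1) / (k + 1)) := by
  rw [intervalIntegral.integral_const_mul]
  have h := intervalIntegral.integral_comp_sub_left (a := t) (b := T) (fun x => x ^ k) T
  simp only [sub_self] at h
  rw [h, integral_pow]
  simp

lemma abs_le_int {T c t : ℝ} (hc : 0 ≤ c) (f r R : ℝ → ℝ)
    (ht : t ∈ Set.Icc 0 T)
    (hf : ∀ s ∈ Set.Icc 0 T, HasDerivAt f (c * f s + r s) s)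
    (hfT : f T = 0)
    (hr : ContinuousOn r (Set.Icc 0 T))
    (hR : ∀ s ∈ Set.Icc t T, |r s| ≤ R s)
    (hRc : Continuous R) :
    |f t| ≤ ∫ s in t..T, R s := by
  obtain ⟨h0t, htT⟩ := ht
  have hsub : Set.uIcc t T ⊆ Set.Icc 0 T := by
    rw [Set.uIcc_of_le htT]
    exact fun s hs => ⟨le_trans h0t hs.1, hs.2⟩
  -- F s = exp (-c*s) * f s
  set F : ℝ → ℝ := fun s => Real.exp (-c * s) * f s with hF
  have hFderiv : ∀ s ∈ Set.uIcc t T, HasDerivAt F (Real.exp (-c * s) * r s) s := by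
    intro s hs
    have h1 : HasDerivAt (fun s => Real.exp (-c * s)) (Real.exp (-c * s) * (-c)) s := by
      simpa using ((hasDerivAt_id s).const_mul (-c)).exp
    have := h1.mul (hf s (hsub hs))
    refine this.congr_deriv ?_
    ring
  have hfc : ContinuousOn f (Set.Icc 0 T) := fun s hs =>
    (hf s hs).continuousAt.continuousWithinAt
  have hint : IntervalIntegrable (fun s => Real.exp (-c * s) * r s) MeasureTheory.volume t T := by
    apply ContinuousOn.intervalIntegrable
    exact ((Real.continuous_exp.comp (continuous_const.mul continuous_id)).continuousOn).mul
      (hr.mono hsub)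
  have heq := intervalIntegral.integral_eq_sub_of_hasDerivAt hFderiv hint
  have hFT : F T = 0 := by simp [hF, hfT]
  have hft : f t = -Real.exp (c * t) * ∫ s in t..T, Real.exp (-c * s) * r s := by
    rw [heq, hFT, zero_sub, hF]
    have h2 : Real.exp (c * t) * Real.exp (-(c * t)) = 1 := by
      rw [← Real.exp_add]; simp
    simp only [neg_mul]
    linear_combination (- f t) * h2
  rw [hft]
  rw [abs_mul, abs_neg, abs_of_pos (Real.exp_pos _)]
  calc Real.exp (c * t) * |∫ s in t..T, Real.exp (-c * s) * r s|
      ≤ Real.exp (c * t) * ∫ s in t..T, |Real.exp (-c * s) * r s| := by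
        apply mul_le_mul_of_nonneg_left
          (intervalIntegral.abs_integral_le_integral_abs htT) (Real.exp_pos _).le
    _ = ∫ s in t..T, Real.exp (c * t) * |Real.exp (-c * s) * r s| := by
        rw [intervalIntegral.integral_const_mul]
    _ ≤ ∫ s in t..T, R s := by
        have hint2 : IntervalIntegrable (fun u => Real.exp (c * t) * |Real.exp (-c * u) * r u|)
            MeasureTheory.volume t T := by
          apply ContinuousOn.intervalIntegrable
          rw [Set.uIcc_of_le htT]
          have hrc : ContinuousOn r (Set.Icc t T) := hr.mono (by
            rw [← Set.uIcc_of_le htT]; exact hsub)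
          have : ContinuousOn (fun u : ℝ => Real.exp (-c * u)) (Set.Icc t T) := by
            fun_prop
          exact (continuous_const.continuousOn).mul ((this.mul hrc).abs)
        apply intervalIntegral.integral_mono_on htT hint2 (hRc.intervalIntegrable t T)
        intro s hs
        rw [abs_mul, abs_of_pos (Real.exp_pos _), ← mul_assoc, ← Real.exp_add]
        calc Real.exp (c * t + -c * s) * |r s| ≤ 1 * |r s| := by
              apply mul_le_mul_of_nonneg_right _ (abs_nonneg _)
              rw [Real.exp_le_one_iff]
              nlinarith [hs.1]
          _ ≤ R s := by rw [one_mul]; exact hR s hs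

lemma aux_ode2 (γ ι ρ v κ E : ℝ) (hγ : γ ≠ 0) (hκ : κ ≠ 0) (hsum : κ = ι + ρ * v) :
    2*ι*(1/(γ*κ)*(1-E)) + 2*ρ*v*(1/(γ*κ)*(1-E)) - 2/γ = 1/(γ*κ) * -(E*(2*κ)) := by
  subst hsum; field_simp; ring

lemma aux_ode1 (γ ι Y ρ v κ E : ℝ) (hγ : γ ≠ 0) (hκ : κ ≠ 0) (hsum : κ = ι + ρ * v) :
    ι*(ι*Y/(γ*κ^2)*(1-E)^2) + ρ*v*(ι*Y/(γ*κ^2)*(1-E)^2) - ι*Y*(1/(γ*κ)*(1-E^2))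
      = ι*Y/(γ*κ^2) * (2*(1-E)^1*(-(E*κ))) := by
  subst hsum; field_simp; ring

set_option maxHeartbeats 1000000 in
/-- Theorem 4.1(ii), first-order coefficient: the policy-iteration coefficients
`a₁ⁿ` converge uniformly on `[0,T]` to the equilibrium coefficient `a₁`, with
the explicit bound
`|a₁(t) − a₁ⁿ(t)| ≤ (ρv(T−t))ⁿ/n!·m + (ιY/(ρv))·(2ρv(T−t))^{n+1}/(n+1)!·M`. -/
theorem stmt_17 (T γ Y ι ρ v : ℝ) (hT : 0 < T) (hγ : 0 < γ) (hY : 0 ≤ Y)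
    (hι : 0 ≤ ι) (hρv : 0 < ρ * v)
    (a₁seq a₂seq : ℕ → ℝ → ℝ)
    (hcont₁ : ContinuousOn (a₁seq 0) (Set.Icc 0 T))
    (hcont₂ : ContinuousOn (a₂seq 0) (Set.Icc 0 T))
    (hode₂ : ∀ n, ∀ t ∈ Set.Icc (0 : ℝ) T,
      HasDerivAt (a₂seq (n + 1))
        (2 * ι * a₂seq (n + 1) t + 2 * ρ * v * a₂seq n t - 2 / γ) t)
    (hterm₂ : ∀ n, a₂seq (n + 1) T = 0)
    (hode₁ : ∀ n, ∀ t ∈ Set.Icc (0 : ℝ) T,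
      HasDerivAt (a₁seq (n + 1))
        (ι * a₁seq (n + 1) t + ρ * v * a₁seq n t - ι * Y * a₂seq (n + 1) t) t)
    (hterm₁ : ∀ n, a₁seq (n + 1) T = 0) :
    let κ : ℝ := ι + ρ * v
    let a₂ : ℝ → ℝ := fun t => (1 / (γ * κ)) * (1 - Real.exp (-2 * κ * (T - t)))
    let a₁ : ℝ → ℝ := fun t => (ι * Y / (γ * κ ^ 2)) * (1 - Real.exp (-κ * (T - t))) ^ 2
    let M : ℝ := sSup ((fun t => |a₂ t - a₂seq 0 t|) '' Set.Icc 0 T)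
    let m : ℝ := sSup ((fun t => |a₁ t - a₁seq 0 t|) '' Set.Icc 0 T)
    TendstoUniformlyOn a₁seq a₁ Filter.atTop (Set.Icc 0 T) ∧
    ∀ n, ∀ t ∈ Set.Icc (0 : ℝ) T,
      |a₁ t - a₁seq n t| ≤ (ρ * v * (T - t)) ^ n / (n.factorial : ℝ) * m +
        (ι * Y / (ρ * v)) * ((2 * ρ * v * (T - t)) ^ (n + 1) / ((n + 1).factorial : ℝ)) * M := by
  intro κ a₂ a₁ M m
  have hκval : κ = ι + ρ * v := rfl
  have hκ : 0 < κ := by rw [hκval]; linarith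
  have hκ' : κ ≠ 0 := hκ.ne'
  have hγ' : γ ≠ 0 := hγ.ne'
  have hρv' : (ρ : ℝ) * v ≠ 0 := hρv.ne'
  have h2ρv : (0:ℝ) < 2 * ρ * v := by linarith
  have hca₂ : Continuous a₂ := by
    simp only [a₂]; fun_prop
  have hca₁ : Continuous a₁ := by
    simp only [a₁]; fun_prop
  have ha₂T : a₂ T = 0 := by simp [a₂]
  have ha₁T : a₁ T = 0 := by simp [a₁]
  -- derivatives of limit functions
  have hda₂ : ∀ t : ℝ, HasDerivAt a₂ (2 * ι * a₂ t + 2 * ρ * v * a₂ t - 2 / γ) t := by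
    intro t
    have h1 : HasDerivAt (fun t : ℝ => -2 * κ * (T - t)) (2 * κ) t := by
      simpa using ((hasDerivAt_id t).const_sub T).const_mul (-2 * κ)
    have h3 := (h1.exp.const_sub 1).const_mul (1 / (γ * κ))
    refine h3.congr_deriv (Eq.symm ?_)
    simp only [a₂]
    linear_combination aux_ode2 γ ι ρ v κ (Real.exp (-2 * κ * (T - t))) hγ' hκ' hκval
  have hda₁ : ∀ t : ℝ, HasDerivAt a₁ (ι * a₁ t + ρ * v * a₁ t - ι * Y * a₂ t) t := by
    intro t
    have h1 : HasDerivAt (fun t : ℝ => -κ * (T - t)) κ t := by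
      simpa using ((hasDerivAt_id t).const_sub T).const_mul (-κ)
    have h4 := ((h1.exp.const_sub 1).pow 2).const_mul (ι * Y / (γ * κ ^ 2))
    refine h4.congr_deriv (Eq.symm ?_)
    have hE : Real.exp (-2 * κ * (T - t)) = Real.exp (-κ * (T - t)) ^ 2 := by
      rw [sq, ← Real.exp_add]; ring_nf
    simp only [a₁, a₂]
    rw [hE]
    linear_combination aux_ode1 γ ι Y ρ v κ (Real.exp (-κ * (T - t))) hγ' hκ' hκval
  -- continuity of the iterates
  have hcseq₂ : ∀ n, ContinuousOn (a₂seq n) (Set.Icc 0 T) := by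
    intro n
    cases n with
    | zero => exact hcont₂
    | succ n => exact fun t ht => (hode₂ n t ht).continuousAt.continuousWithinAt
  have hcseq₁ : ∀ n, ContinuousOn (a₁seq n) (Set.Icc 0 T) := by
    intro n
    cases n with
    | zero => exact hcont₁
    | succ n => exact fun t ht => (hode₁ n t ht).continuousAt.continuousWithinAt
  -- bounds via sSup
  have hMb : ∀ t ∈ Set.Icc 0 T, |a₂ t - a₂seq 0 t| ≤ M := by
    intro t ht
    exact le_csSup (isCompact_Icc.bddAbove_image
      ((hca₂.continuousOn.sub hcont₂).abs)) (Set.mem_image_of_mem _ ht)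
  have hmb : ∀ t ∈ Set.Icc 0 T, |a₁ t - a₁seq 0 t| ≤ m := by
    intro t ht
    exact le_csSup (isCompact_Icc.bddAbove_image
      ((hca₁.continuousOn.sub hcont₁).abs)) (Set.mem_image_of_mem _ ht)
  have hM0 : 0 ≤ M := le_trans (abs_nonneg _) (hMb T ⟨hT.le, le_refl T⟩)
  have hm0 : 0 ≤ m := le_trans (abs_nonneg _) (hmb T ⟨hT.le, le_refl T⟩)
  -- the main induction
  have key : ∀ n,
      (∀ t ∈ Set.Icc (0:ℝ) T,
        |a₂ t - a₂seq n t| ≤ (2 * ρ * v * (T - t)) ^ n / (n.factorial : ℝ) * M) ∧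
      (∀ t ∈ Set.Icc (0:ℝ) T,
        |a₁ t - a₁seq n t| ≤ (ρ * v * (T - t)) ^ n / (n.factorial : ℝ) * m +
          (ι * Y / (ρ * v)) * ((2 * ρ * v * (T - t)) ^ (n + 1) / ((n + 1).factorial : ℝ)) * M) := by
    intro n
    induction n with
    | zero =>
      constructor
      · intro t ht; simpa using hMb t ht
      · intro t ht
        have h1 := hmb t ht
        have h2 : 0 ≤ (ι * Y / (ρ * v)) *
            ((2 * ρ * v * (T - t)) ^ (0 + 1) / ((0 + 1).factorial : ℝ)) * M := by
          have hTt : 0 ≤ T - t := by linarith [ht.2]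
          have : (0:ℝ) ≤ 2 * ρ * v * (T - t) := by positivity
          positivity
        simp only [pow_zero, Nat.factorial_zero, Nat.cast_one]
        calc |a₁ t - a₁seq 0 t| ≤ m := h1
          _ ≤ 1 / 1 * m + _ := by rw [one_div_one, one_mul]; linarith
    | succ n ih =>
      obtain ⟨ih₂, ih₁⟩ := ih
      -- step for a₂
      have step₂ : ∀ t ∈ Set.Icc (0:ℝ) T,
          |a₂ t - a₂seq (n+1) t| ≤
            (2 * ρ * v * (T - t)) ^ (n+1) / ((n+1).factorial : ℝ) * M := by
        intro t ht
        set A : ℝ := (2 * ρ * v) ^ (n + 1) / (n.factorial : ℝ) * M with hA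
        have hb := abs_le_int (T := T) (c := 2 * ι) (t := t) (by linarith)
          (fun s => a₂ s - a₂seq (n+1) s)
          (fun s => 2 * ρ * v * (a₂ s - a₂seq n s))
          (fun s => A * (T - s) ^ n) ht
          (by
            intro s hs
            have h := (hda₂ s).sub (hode₂ n s hs)
            show HasDerivAt (fun s => a₂ s - a₂seq (n+1) s)
              (2 * ι * (a₂ s - a₂seq (n+1) s) + 2 * ρ * v * (a₂ s - a₂seq n s)) s
            refine h.congr_deriv ?_
            ring)
          (by show a₂ T - a₂seq (n+1) T = 0; rw [ha₂T, hterm₂ n]; ring)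
          ((continuous_const.continuousOn).mul (hca₂.continuousOn.sub (hcseq₂ n)))
          (by
            intro s hs
            have hs' : s ∈ Set.Icc (0:ℝ) T := ⟨le_trans ht.1 hs.1, hs.2⟩
            have h1 := ih₂ s hs'
            show |2 * ρ * v * (a₂ s - a₂seq n s)| ≤ A * (T - s) ^ n
            have h2 : A * (T - s) ^ n =
                2 * ρ * v * ((2 * ρ * v * (T - s)) ^ n / (n.factorial : ℝ) * M) := by
              rw [hA, mul_pow (2*ρ*v) (T-s) n]; ring
            rw [abs_mul (2*ρ*v), abs_of_pos h2ρv, h2]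
            exact mul_le_mul_of_nonneg_left h1 h2ρv.le)
          (continuous_const.mul ((continuous_const.sub continuous_id).pow n))
        calc |a₂ t - a₂seq (n+1) t| ≤ ∫ s in t..T, A * (T - s) ^ n := hb
          _ = A * ((T - t) ^ (n+1) / (n+1)) := int_poly t T A n
          _ = (2 * ρ * v * (T - t)) ^ (n+1) / ((n+1).factorial : ℝ) * M := by
            rw [hA, Nat.factorial_succ, mul_pow (2*ρ*v) (T-t) (n+1)]
            have h1 : (n.factorial : ℝ) ≠ 0 := Nat.cast_ne_zero.mpr n.factorial_ne_zero
            have h2 : ((n:ℝ) + 1) ≠ 0 := by positivity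
            push_cast
            field_simp
      -- step for a₁
      have step₁ : ∀ t ∈ Set.Icc (0:ℝ) T,
          |a₁ t - a₁seq (n+1) t| ≤
            (ρ * v * (T - t)) ^ (n+1) / ((n+1).factorial : ℝ) * m +
              (ι * Y / (ρ * v)) * ((2 * ρ * v * (T - t)) ^ (n+1+1) / ((n+1+1).factorial : ℝ)) * M := by
        intro t ht
        set A₁ : ℝ := (ρ * v) ^ (n + 1) / (n.factorial : ℝ) * m with hA₁
        set A₂ : ℝ := 2 * (ι * Y) * (2 * ρ * v) ^ (n + 1) / ((n+1).factorial : ℝ) * M with hA₂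
        have hιY : (0:ℝ) ≤ ι * Y := by positivity
        have hb := abs_le_int (T := T) (c := ι) (t := t) hι
          (fun s => a₁ s - a₁seq (n+1) s)
          (fun s => ρ * v * (a₁ s - a₁seq n s) - ι * Y * (a₂ s - a₂seq (n+1) s))
          (fun s => A₁ * (T - s) ^ n + A₂ * (T - s) ^ (n+1)) ht
          (by
            intro s hs
            have h := (hda₁ s).sub (hode₁ n s hs)
            show HasDerivAt (fun s => a₁ s - a₁seq (n+1) s)
              (ι * (a₁ s - a₁seq (n+1) s) +
                (ρ * v * (a₁ s - a₁seq n s) - ι * Y * (a₂ s - a₂seq (n+1) s))) s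
            refine h.congr_deriv ?_
            ring)
          (by show a₁ T - a₁seq (n+1) T = 0; rw [ha₁T, hterm₁ n]; ring)
          (((continuous_const.continuousOn).mul (hca₁.continuousOn.sub (hcseq₁ n))).sub
            ((continuous_const.continuousOn).mul (hca₂.continuousOn.sub (hcseq₂ (n+1)))))
          (by
            intro s hs
            have hs' : s ∈ Set.Icc (0:ℝ) T := ⟨le_trans ht.1 hs.1, hs.2⟩
            have h1 := ih₁ s hs'
            have h2 := step₂ s hs'
            show |ρ * v * (a₁ s - a₁seq n s) - ι * Y * (a₂ s - a₂seq (n+1) s)| ≤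
              A₁ * (T - s) ^ n + A₂ * (T - s) ^ (n+1)
            have e1 : ρ * v * ((ρ * v * (T - s)) ^ n / (n.factorial : ℝ) * m) =
                A₁ * (T - s) ^ n := by rw [hA₁, mul_pow (ρ*v) (T-s) n]; ring
            have e2 : ρ * v * ((ι * Y / (ρ * v)) *
                  ((2 * ρ * v * (T - s)) ^ (n+1) / ((n+1).factorial : ℝ)) * M) +
                ι * Y * ((2 * ρ * v * (T - s)) ^ (n+1) / ((n+1).factorial : ℝ) * M) =
                A₂ * (T - s) ^ (n+1) := by
              rw [hA₂, mul_pow (2*ρ*v) (T-s) (n+1)]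
              have hf : (((n+1).factorial : ℕ) : ℝ) ≠ 0 :=
                Nat.cast_ne_zero.mpr (n+1).factorial_ne_zero
              have hρ : ρ ≠ 0 := left_ne_zero_of_mul hρv'
              have hv : v ≠ 0 := right_ne_zero_of_mul hρv'
              field_simp
              ring
            calc |ρ * v * (a₁ s - a₁seq n s) - ι * Y * (a₂ s - a₂seq (n+1) s)|
                ≤ |ρ * v * (a₁ s - a₁seq n s)| + |ι * Y * (a₂ s - a₂seq (n+1) s)| :=
                  abs_sub _ _
              _ = ρ * v * |a₁ s - a₁seq n s| + ι * Y * |a₂ s - a₂seq (n+1) s| := by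
                  rw [abs_mul (ρ*v), abs_mul (ι*Y), abs_of_pos hρv, abs_of_nonneg hιY]
              _ ≤ ρ * v * ((ρ * v * (T - s)) ^ n / (n.factorial : ℝ) * m +
                    (ι * Y / (ρ * v)) * ((2 * ρ * v * (T - s)) ^ (n + 1) / ((n + 1).factorial : ℝ)) * M) +
                  ι * Y * ((2 * ρ * v * (T - s)) ^ (n+1) / ((n+1).factorial : ℝ) * M) := by
                  exact add_le_add (mul_le_mul_of_nonneg_left h1 hρv.le)
                    (mul_le_mul_of_nonneg_left h2 hιY)
              _ = A₁ * (T - s) ^ n + A₂ * (T - s) ^ (n+1) := by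
                  linear_combination e1 + e2)
          (by
            apply Continuous.add
            · exact continuous_const.mul ((continuous_const.sub continuous_id).pow n)
            · exact continuous_const.mul ((continuous_const.sub continuous_id).pow (n+1)))
        have hint1 : IntervalIntegrable (fun s => A₁ * (T - s) ^ n) MeasureTheory.volume t T :=
          (continuous_const.mul ((continuous_const.sub continuous_id).pow n)).intervalIntegrable t T
        have hint2 : IntervalIntegrable (fun s => A₂ * (T - s) ^ (n+1)) MeasureTheory.volume t T :=
          (continuous_const.mul ((continuous_const.sub continuous_id).pow (n+1))).intervalIntegrable t T
        calc |a₁ t - a₁seq (n+1) t|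
            ≤ ∫ s in t..T, (A₁ * (T - s) ^ n + A₂ * (T - s) ^ (n+1)) := hb
          _ = (∫ s in t..T, A₁ * (T - s) ^ n) + ∫ s in t..T, A₂ * (T - s) ^ (n+1) :=
              intervalIntegral.integral_add hint1 hint2
          _ = A₁ * ((T - t) ^ (n+1) / (n+1)) + A₂ * ((T - t) ^ (n+1+1) / ((n+1 : ℕ)+1)) := by
              rw [int_poly, int_poly]
          _ = (ρ * v * (T - t)) ^ (n+1) / ((n+1).factorial : ℝ) * m +
              (ι * Y / (ρ * v)) * ((2 * ρ * v * (T - t)) ^ (n+1+1) / ((n+1+1).factorial : ℝ)) * M := by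
              rw [hA₁, hA₂, Nat.factorial_succ (n+1), Nat.factorial_succ n,
                mul_pow (ρ*v) (T-t) (n+1), mul_pow (2*ρ*v) (T-t) (n+1+1)]
              have h1 : (n.factorial : ℝ) ≠ 0 := Nat.cast_ne_zero.mpr n.factorial_ne_zero
              have h2 : ((n:ℝ) + 1) ≠ 0 := by positivity
              have h3 : ((n:ℝ) + 1 + 1) ≠ 0 := by positivity
              have hρ : ρ ≠ 0 := left_ne_zero_of_mul hρv'
              have hv : v ≠ 0 := right_ne_zero_of_mul hρv'
              push_cast
              field_simp
              ring
      exact ⟨step₂, step₁⟩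
  refine ⟨?_, fun n => (key n).2⟩
  -- uniform convergence
  rw [Metric.tendstoUniformlyOn_iff]
  intro ε hε
  have hC : Filter.Tendsto (fun n : ℕ => (ρ * v * T) ^ n / (n.factorial : ℝ) * m +
      (ι * Y / (ρ * v)) * ((2 * ρ * v * T) ^ (n + 1) / ((n + 1).factorial : ℝ)) * M)
      Filter.atTop (nhds 0) := by
    have h1 := (FloorSemiring.tendsto_pow_div_factorial_atTop (ρ * v * T)).mul_const m
    have h2 : Filter.Tendsto (fun n : ℕ => (2 * ρ * v * T) ^ (n + 1) / ((n + 1).factorial : ℝ))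
        Filter.atTop (nhds 0) :=
      (FloorSemiring.tendsto_pow_div_factorial_atTop (2 * ρ * v * T)).comp (Filter.tendsto_add_atTop_nat 1)
    have h3 := (h2.const_mul (ι * Y / (ρ * v))).mul_const M
    simpa using h1.add h3
  filter_upwards [hC.eventually (gt_mem_nhds hε)] with n hn t ht
  rw [Real.dist_eq]
  have hTt : 0 ≤ T - t := by linarith [ht.2]
  have hle1 : ρ * v * (T - t) ≤ ρ * v * T := by nlinarith [ht.1]
  have hle2 : 2 * ρ * v * (T - t) ≤ 2 * ρ * v * T := by nlinarith [ht.1]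
  have hnn1 : (0:ℝ) ≤ ρ * v * (T - t) := by positivity
  have hnn2 : (0:ℝ) ≤ 2 * ρ * v * (T - t) := by positivity
  have hιY : (0:ℝ) ≤ ι * Y / (ρ * v) := by positivity
  calc |a₁ t - a₁seq n t|
      ≤ (ρ * v * (T - t)) ^ n / (n.factorial : ℝ) * m +
        (ι * Y / (ρ * v)) * ((2 * ρ * v * (T - t)) ^ (n + 1) / ((n + 1).factorial : ℝ)) * M :=
        (key n).2 t ht
    _ ≤ (ρ * v * T) ^ n / (n.factorial : ℝ) * m +
        (ι * Y / (ρ * v)) * ((2 * ρ * v * T) ^ (n + 1) / ((n + 1).factorial : ℝ)) * M := by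
        gcongr
    _ < ε := hn
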